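/- Let R₁ be a rotation about a line ℓ₁ and R₂ a half-turn about a line ℓ₂ in ℝ³, with R₁(B) = R₂(B) = C for some points B ≠ C, and suppose there is a line ℓ_B through B mapped by both R₁ and R₂ to the same line ℓ_C through C. If ℓ₁ and ℓ₂ are parallel and distinct, then ℓ_B and ℓ_C are both parallel to ℓ₁. -/

import Mathlib

noncomputable section

open scoped RealInnerProductSpace

/-- Euclidean 3-space. -/
abbrev E3 : Type := EuclideanSpace ℝ (Fin 3)

/-- A line in `ℝ³`: an affine subspace with one-dimensional direction. -/
def IsLine (ℓ : AffineSubspace ℝ E3) : Prop := Module.finrank ℝ ℓ.direction = 1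

/-- A rotation of `ℝ³` about the line `ℓ`: an orientation-preserving isometry of `ℝ³`
fixing every point of `ℓ`. -/
def IsRotationAbout (ℓ : AffineSubspace ℝ E3) (R : E3 ≃ᵃⁱ[ℝ] E3) : Prop :=
  LinearMap.det (R.linearIsometryEquiv.toLinearEquiv : E3 →ₗ[ℝ] E3) = 1 ∧ ∀ x ∈ ℓ, R x = x

/-- A half-turn (rotation by angle `π`) about the line `ℓ`: the isometry fixing `ℓ`
pointwise whose linear part acts as `-1` on the orthogonal complement of the direction. -/
def IsHalfTurnAbout (ℓ : AffineSubspace ℝ E3) (R : E3 ≃ᵃⁱ[ℝ] E3) : Prop :=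
  (∀ x ∈ ℓ, R x = x) ∧ ∀ v ∈ ℓ.directionᗮ, R.linearIsometryEquiv v = -v

lemma exists_span_gen (S : Submodule ℝ E3) (h : Module.finrank ℝ S = 1) :
    ∃ v : E3, v ≠ 0 ∧ S = (ℝ ∙ v) := by
  rw [finrank_eq_one_iff'] at h
  obtain ⟨v, hv0, hv⟩ := h
  refine ⟨(v : E3), by simpa using hv0, le_antisymm ?_ ?_⟩
  · intro x hx
    obtain ⟨c, hc⟩ := hv ⟨x, hx⟩
    rw [Submodule.mem_span_singleton]
    exact ⟨c, congrArg Subtype.val hc⟩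
  · rw [Submodule.span_le, Set.singleton_subset_iff]
    exact v.2

lemma det_diag (L : E3 ≃ₗᵢ[ℝ] E3) (d v w : E3)
    (li : LinearIndependent ℝ ![d, v, w])
    (a b c : ℝ) (h0 : L d = a • d) (h1 : L v = b • v) (h2 : L w = c • w) :
    LinearMap.det (L.toLinearEquiv : E3 →ₗ[ℝ] E3) = a * b * c := by
  have hcard : Fintype.card (Fin 3) = Module.finrank ℝ E3 := by
    simp [finrank_euclideanSpace]
  let b3 : Module.Basis (Fin 3) ℝ E3 := basisOfLinearIndependentOfCardEqFinrank li hcard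
  have hb : ⇑b3 = ![d, v, w] := coe_basisOfLinearIndependentOfCardEqFinrank li hcard
  rw [← LinearMap.det_toMatrix b3]
  have hmat : LinearMap.toMatrix b3 b3 (L.toLinearEquiv : E3 →ₗ[ℝ] E3)
      = Matrix.diagonal ![a, b, c] := by
    ext i j
    rw [LinearMap.toMatrix_apply]
    have hLbj : (L.toLinearEquiv : E3 →ₗ[ℝ] E3) (b3 j) = (![a, b, c] j) • b3 j := by
      fin_cases j <;> simp [hb, h0, h1, h2]
    rw [hLbj, map_smul, Module.Basis.repr_self, Matrix.diagonal]
    by_cases hij : i = j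
    · subst hij; simp
    · simp [hij, Finsupp.single_apply, Ne.symm hij]
  rw [hmat, Matrix.det_diagonal]
  simp [Fin.prod_univ_three]

lemma halfplane (L : E3 ≃ₗᵢ[ℝ] E3)
    (hdet : LinearMap.det (L.toLinearEquiv : E3 →ₗ[ℝ] E3) = 1)
    (d : E3) (hd : d ≠ 0) (hLd : L d = d)
    (v : E3) (hv0 : v ≠ 0) (hv : v ∈ (ℝ ∙ d)ᗮ)
    (ε : ℝ) (hε : ε = 1 ∨ ε = -1) (hLv : L v = ε • v) :
    ∀ x ∈ (ℝ ∙ d)ᗮ, L x = ε • x := by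
  have hε0 : ε ≠ 0 := by rcases hε with h | h <;> simp [h]
  have hdv : ⟪d, v⟫ = 0 := hv d (Submodule.mem_span_singleton_self d)
  have hfr3 : Module.finrank ℝ E3 = 3 := by simp [finrank_euclideanSpace]
  have hrange2 : Set.range ![d, v] = {d, v} := by
    ext x; simp [Fin.exists_fin_two]; tauto
  have li2 : LinearIndependent ℝ ![d, v] := by
    apply linearIndependent_of_ne_zero_of_inner_eq_zero
    · intro i; fin_cases i <;> simpa
    · intro i j hij
      fin_cases i <;> fin_cases j <;>
        first
          | exact (hij rfl).elim
          | (simp only [Matrix.cons_val_zero, Matrix.cons_val_one, Matrix.head_cons]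
             first | exact hdv | (rw [real_inner_comm]; exact hdv))
  set K : Submodule ℝ E3 := Submodule.span ℝ {d, v} with hK
  have hfrK : Module.finrank ℝ K = 2 := by
    rw [hK, ← hrange2, finrank_span_eq_card li2]; simp
  have hfrKo : Module.finrank ℝ Kᗮ = 1 := by
    have := Submodule.finrank_add_finrank_orthogonal K
    omega
  obtain ⟨w, hwK, hw0⟩ : ∃ w, w ∈ Kᗮ ∧ w ≠ 0 := by
    apply Submodule.exists_mem_ne_zero_of_ne_bot
    intro h; rw [h] at hfrKo; simp at hfrKo
  have hdK : d ∈ K := Submodule.subset_span (by simp)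
  have hvK : v ∈ K := Submodule.subset_span (by simp)
  have hdw : ⟪d, w⟫ = 0 := hwK d hdK
  have hvw : ⟪v, w⟫ = 0 := hwK v hvK
  have hLwK : L w ∈ Kᗮ := by
    rw [Submodule.mem_orthogonal]
    intro u hu
    obtain ⟨m, n, rfl⟩ := Submodule.mem_span_pair.mp hu
    have h1 : ⟪d, L w⟫ = 0 := by
      calc ⟪d, L w⟫ = ⟪L d, L w⟫ := by rw [hLd]
      _ = ⟪d, w⟫ := L.inner_map_map d w
      _ = 0 := hdw
    have h2 : ⟪v, L w⟫ = 0 := by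
      have h3 : ⟪L v, L w⟫ = ⟪v, w⟫ := L.inner_map_map v w
      rw [hLv, hvw, real_inner_smul_left] at h3
      exact (mul_eq_zero.mp h3).resolve_left hε0
    rw [inner_add_left, real_inner_smul_left, real_inner_smul_left, h1, h2]
    ring
  have hspw : (ℝ ∙ w) = Kᗮ := by
    apply Submodule.eq_of_le_of_finrank_eq
    · rw [Submodule.span_le, Set.singleton_subset_iff]; exact hwK
    · rw [hfrKo, finrank_span_singleton hw0]
  obtain ⟨δ, hδ⟩ : ∃ δ : ℝ, L w = δ • w := by
    have h4 := hspw ▸ hLwK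
    rw [Submodule.mem_span_singleton] at h4
    obtain ⟨δ, hδ⟩ := h4; exact ⟨δ, hδ.symm⟩
  have li3 : LinearIndependent ℝ ![d, v, w] := by
    apply linearIndependent_of_ne_zero_of_inner_eq_zero
    · intro i; fin_cases i <;> simpa
    · intro i j hij
      fin_cases i <;> fin_cases j <;>
        first
          | exact (hij rfl).elim
          | (simp only [Matrix.cons_val_zero, Matrix.cons_val_one, Matrix.head_cons,
               Matrix.cons_val_two, Matrix.tail_cons]
             first
               | exact hdv | exact hdw | exact hvw
               | (rw [real_inner_comm]; first | exact hdv | exact hdw | exact hvw))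
  have hdet' : ε * δ = 1 := by
    have h5 := det_diag L d v w li3 1 ε δ (by simpa using hLd) hLv hδ
    rw [hdet] at h5; linarith
  have hδε : δ = ε := by rcases hε with h | h <;> subst h <;> linarith
  rw [hδε] at hδ
  have hsub : Submodule.span ℝ {v, w} ≤ (ℝ ∙ d)ᗮ := by
    rw [Submodule.span_le]
    intro x hx
    rw [SetLike.mem_coe, Submodule.mem_orthogonal]
    intro y hy
    obtain ⟨c, rfl⟩ := Submodule.mem_span_singleton.mp hy
    rcases hx with h | h
    · subst h; rw [real_inner_smul_left, hdv, mul_zero]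
    · simp only [Set.mem_singleton_iff] at h; subst h
      rw [real_inner_smul_left, hdw, mul_zero]
  have hPeq : Submodule.span ℝ {v, w} = (ℝ ∙ d)ᗮ := by
    apply Submodule.eq_of_le_of_finrank_eq hsub
    have h1 : Module.finrank ℝ (ℝ ∙ d)ᗮ = 2 := by
      have h6 := Submodule.finrank_add_finrank_orthogonal (ℝ ∙ d)
      rw [finrank_span_singleton hd] at h6
      omega
    have li2' : LinearIndependent ℝ ![v, w] := by
      apply linearIndependent_of_ne_zero_of_inner_eq_zero
      · intro i; fin_cases i <;> simpa
      · intro i j hij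
        fin_cases i <;> fin_cases j <;>
          first
            | exact (hij rfl).elim
            | (simp only [Matrix.cons_val_zero, Matrix.cons_val_one, Matrix.head_cons]
               first | exact hvw | (rw [real_inner_comm]; exact hvw))
    have hr : Set.range ![v, w] = {v, w} := by ext x; simp [Fin.exists_fin_two]; tauto
    rw [h1, ← hr, finrank_span_eq_card li2']; simp
  intro x hx
  rw [← hPeq] at hx
  obtain ⟨m, n, rfl⟩ := Submodule.mem_span_pair.mp hx
  rw [map_add, map_smul, map_smul, hLv, hδ, smul_add, smul_smul, smul_smul,
    mul_comm m ε, mul_comm n ε, ← smul_smul, ← smul_smul]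

/-- If `R₁` (rotation about `ℓ₁`) and `R₂` (half-turn about `ℓ₂`) both take `B` to `C ≠ B`
and both map a line `ℓ_B` through `B` to the same line `ℓ_C` through `C`, and if `ℓ₁` and
`ℓ₂` are parallel and distinct, then `ℓ_B` and `ℓ_C` are both parallel to `ℓ₁`. -/
theorem stmt3 (B C : E3) (hBC : B ≠ C) (ℓ₁ ℓ₂ ℓB ℓC : AffineSubspace ℝ E3)
    (hℓ₁ : IsLine ℓ₁) (hℓ₂ : IsLine ℓ₂) (hℓB : IsLine ℓB) (hℓC : IsLine ℓC)
    (hBmem : B ∈ ℓB) (hCmem : C ∈ ℓC)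
    (R₁ R₂ : E3 ≃ᵃⁱ[ℝ] E3) (hR₁ : IsRotationAbout ℓ₁ R₁) (hR₂ : IsHalfTurnAbout ℓ₂ R₂)
    (hB₁ : R₁ B = C) (hB₂ : R₂ B = C)
    (himg₁ : R₁ '' (ℓB : Set E3) = (ℓC : Set E3))
    (himg₂ : R₂ '' (ℓB : Set E3) = (ℓC : Set E3))
    (hpar : ℓ₁.direction = ℓ₂.direction) (hne : ℓ₁ ≠ ℓ₂) :
    ℓB.direction = ℓ₁.direction ∧ ℓC.direction = ℓ₁.direction := by
  obtain ⟨hdet₁, hfix₁⟩ := hR₁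
  obtain ⟨hfix₂, hhalf₂⟩ := hR₂
  set L₁ := R₁.linearIsometryEquiv with hL₁def
  set L₂ := R₂.linearIsometryEquiv with hL₂def
  -- lines are nonempty
  have hnonempty : ∀ (ℓ : AffineSubspace ℝ E3), IsLine ℓ → ∃ p, p ∈ ℓ := by
    intro ℓ hℓ
    by_contra h
    push_neg at h
    have he : (ℓ : Set E3) = ∅ := Set.eq_empty_iff_forall_notMem.mpr h
    rw [IsLine, AffineSubspace.direction_eq_vectorSpan, he, vectorSpan_empty] at hℓ
    simp at hℓ
  obtain ⟨p₁, hp₁⟩ := hnonempty ℓ₁ hℓ₁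
  obtain ⟨p₂, hp₂⟩ := hnonempty ℓ₂ hℓ₂
  obtain ⟨d, hd0, hD⟩ := exists_span_gen ℓ₁.direction hℓ₁
  obtain ⟨u, hu0, hU⟩ := exists_span_gen ℓB.direction hℓB
  -- linear parts fix the direction pointwise
  have hfixlin : ∀ (R : E3 ≃ᵃⁱ[ℝ] E3) (ℓ : AffineSubspace ℝ E3), (∀ x ∈ ℓ, R x = x) →
      ∀ v ∈ ℓ.direction, R.linearIsometryEquiv v = v := by
    intro R ℓ hfix
    have hle : ℓ.direction ≤
        LinearMap.ker ((R.linearIsometryEquiv.toLinearEquiv : E3 →ₗ[ℝ] E3) - LinearMap.id) := by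
      rw [AffineSubspace.direction_eq_vectorSpan, vectorSpan_def, Submodule.span_le]
      rintro v ⟨x, hx, y, hy, rfl⟩
      have h2 : R.linearIsometryEquiv (x -ᵥ y) = x -ᵥ y := by
        rw [AffineIsometryEquiv.map_vsub, hfix x hx, hfix y hy]
      simp only [SetLike.mem_coe, LinearMap.mem_ker, LinearMap.sub_apply, LinearMap.id_apply,
        sub_eq_zero]
      exact h2
    intro v hv
    have h3 := hle hv
    simp only [LinearMap.mem_ker, LinearMap.sub_apply, LinearMap.id_apply, sub_eq_zero] at h3
    exact h3
  have hL₁fix : ∀ v ∈ ℓ₁.direction, L₁ v = v := hfixlin R₁ ℓ₁ hfix₁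
  have hL₂fix : ∀ v ∈ ℓ₂.direction, L₂ v = v := hfixlin R₂ ℓ₂ hfix₂
  have hdmem : d ∈ ℓ₁.direction := hD ▸ Submodule.mem_span_singleton_self d
  have hL₁d : L₁ d = d := hL₁fix d hdmem
  have hL₂neg : ∀ x ∈ (ℝ ∙ d)ᗮ, L₂ x = -x := by
    intro x hx
    apply hhalf₂
    rw [← hpar, hD]
    exact hx
  have hL₁span : ∀ x ∈ (ℝ ∙ d), L₁ x = x := by
    intro x hx; exact hL₁fix x (hD ▸ hx)
  have hL₂span : ∀ x ∈ (ℝ ∙ d), L₂ x = x := by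
    intro x hx; exact hL₂fix x (hpar ▸ hD ▸ hx)
  have hdecomp : ∀ x : E3, ∃ a ∈ (ℝ ∙ d), ∃ b ∈ (ℝ ∙ d)ᗮ, x = a + b := fun x =>
    Submodule.exists_add_mem_mem_orthogonal (K := ℝ ∙ d) x
  have huniq : ∀ b ∈ (ℝ ∙ d), b ∈ (ℝ ∙ d)ᗮ → b = 0 := by
    intro b h1 h2
    exact Submodule.disjoint_def.mp (Submodule.orthogonal_disjoint (ℝ ∙ d)) b h1 h2
  have hL₁P : ∀ x ∈ (ℝ ∙ d)ᗮ, L₁ x ∈ (ℝ ∙ d)ᗮ := by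
    intro x hx
    rw [Submodule.mem_orthogonal]
    intro y hy
    obtain ⟨c, rfl⟩ := Submodule.mem_span_singleton.mp hy
    have h5 : ⟪L₁ d, L₁ x⟫ = ⟪d, x⟫ := L₁.inner_map_map d x
    rw [hL₁d] at h5
    have hdx : ⟪d, x⟫ = 0 := hx d (Submodule.mem_span_singleton_self d)
    rw [real_inner_smul_left, h5, hdx, mul_zero]
  -- the images of u under L₁, L₂ lie in ℓC.direction
  have humem : u ∈ ℓB.direction := hU ▸ Submodule.mem_span_singleton_self u
  have hBu : u +ᵥ B ∈ ℓB := AffineSubspace.vadd_mem_of_mem_direction humem hBmem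
  have hLC : ∀ (R : E3 ≃ᵃⁱ[ℝ] E3), R '' (ℓB : Set E3) = (ℓC : Set E3) → R B = C →
      R.linearIsometryEquiv u ∈ ℓC.direction := by
    intro R himg hBmap
    have h1 : R (u +ᵥ B) ∈ ℓC := by
      rw [← AffineSubspace.mem_coe, ← himg]
      exact ⟨u +ᵥ B, hBu, rfl⟩
    have h2 : R.linearIsometryEquiv u = R (u +ᵥ B) -ᵥ R B := by
      rw [← AffineIsometryEquiv.map_vsub]
      congr 1
      exact (vadd_vsub u B).symm
    rw [h2, hBmap]
    exact AffineSubspace.vsub_mem_direction h1 hCmem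
  have hL₁uC : L₁ u ∈ ℓC.direction := hLC R₁ himg₁ hB₁
  have hL₂uC : L₂ u ∈ ℓC.direction := hLC R₂ himg₂ hB₂
  have hL₁u0 : L₁ u ≠ 0 := fun h => hu0 (by simpa using congrArg L₁.symm h)
  have hspanC : (ℝ ∙ (L₁ u)) = ℓC.direction := by
    apply Submodule.eq_of_le_of_finrank_eq
    · rw [Submodule.span_le, Set.singleton_subset_iff]; exact hL₁uC
    · rw [hℓC, finrank_span_singleton hL₁u0]
  obtain ⟨c, hc⟩ : ∃ c : ℝ, L₂ u = c • L₁ u := by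
    have h6 := hspanC ▸ hL₂uC
    rw [Submodule.mem_span_singleton] at h6
    obtain ⟨c, hc⟩ := h6; exact ⟨c, hc.symm⟩
  have hcpm : c = 1 ∨ c = -1 := by
    have h1 : ‖L₂ u‖ = ‖u‖ := L₂.norm_map u
    have h2 : ‖c • L₁ u‖ = |c| * ‖u‖ := by
      rw [norm_smul, L₁.norm_map]; simp [Real.norm_eq_abs]
    rw [hc, h2] at h1
    have hun : ‖u‖ ≠ 0 := norm_ne_zero_iff.mpr hu0
    have habs : |c| = 1 := by
      field_simp at h1
      tauto
    exact (abs_eq (by norm_num : (0:ℝ) ≤ 1)).mp habs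
  -- decompose u
  obtain ⟨a, ha, b, hb, hab⟩ := hdecomp u
  have hL₁u : L₁ u = a + L₁ b := by rw [hab, map_add, hL₁span a ha]
  have hL₂u : L₂ u = a - b := by rw [hab, map_add, hL₂span a ha, hL₂neg b hb, sub_eq_add_neg]
  -- pointwise formula for affine isometries
  have hRpt : ∀ (R : E3 ≃ᵃⁱ[ℝ] E3) (x y : E3), R x = R.linearIsometryEquiv (x -ᵥ y) +ᵥ R y := by
    intro R x y
    rw [AffineIsometryEquiv.map_vsub, vsub_vadd]
  -- the R₁ = R₂ contradiction
  have hR1R2 : (∀ x : E3, L₁ x = L₂ x) → False := by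
    intro hLL
    have hRR : ∀ x : E3, R₁ x = R₂ x := by
      intro x
      rw [hRpt R₁ x B, hRpt R₂ x B, hB₁, hB₂, hLL]
    have hle : ℓ₁ ≤ ℓ₂ := by
      intro x hx
      have hfx : R₂ x = x := by rw [← hRR]; exact hfix₁ x hx
      have hw : L₂ (x -ᵥ p₂) = x -ᵥ p₂ := by
        rw [AffineIsometryEquiv.map_vsub, hfx, hfix₂ p₂ hp₂]
      obtain ⟨a', ha', b', hb', hab'⟩ := hdecomp (x -ᵥ p₂)
      have h8 : a' - b' = x -ᵥ p₂ := by
        rw [← hw, hab', map_add, hL₂span a' ha', hL₂neg b' hb', sub_eq_add_neg]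
      have heq : a' - b' = a' + b' := h8.trans hab'
      have hb'0 : b' = 0 := by
        have h10 : (2:ℝ) • b' = 0 := by
          rw [two_smul]
          have h11 : (a' + b') - (a' - b') = b' + b' := by abel
          rw [← h11, ← heq, sub_self]
        simpa using h10
      have h11 : x -ᵥ p₂ ∈ ℓ₂.direction := by
        rw [← hpar, hD, hab', hb'0, add_zero]; exact ha'
      exact (AffineSubspace.vsub_right_mem_direction_iff_mem hp₂ x).mp h11
    exact hne (AffineSubspace.ext_of_direction_eq hpar ⟨p₁, hp₁, hle hp₁⟩)
  -- the R₁ = id contradiction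
  have hR1id : (∀ x : E3, L₁ x = x) → False := by
    intro hLL
    have hfixB : R₁ B = B := by rw [hRpt R₁ B p₁, hfix₁ p₁ hp₁, hLL, vsub_vadd]
    exact hBC (by rw [← hB₁, hfixB])
  rcases hcpm with hc1 | hc1
  · -- c = 1 : L₂ u = L₁ u
    rw [hc1, one_smul] at hc
    have heq : a + L₁ b = a + -b := by
      rw [← hL₁u, ← hc, hL₂u, sub_eq_add_neg]
    have hLb : L₁ b = -b := add_left_cancel heq
    by_cases hbz : b = 0
    · have huD : u ∈ (ℝ ∙ d) := by rw [hab, hbz, add_zero]; exact ha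
      have h1 : ℓB.direction = ℓ₁.direction := by
        rw [hU, hD]
        apply Submodule.eq_of_le_of_finrank_eq
        · rw [Submodule.span_le, Set.singleton_subset_iff]; exact huD
        · rw [finrank_span_singleton hu0, finrank_span_singleton hd0]
      have hL₁uu : L₁ u = u := hL₁span u huD
      refine ⟨h1, ?_⟩
      rw [← hspanC, hL₁uu, ← hU, h1]
    · have hplane := halfplane L₁ hdet₁ d hd0 hL₁d b hbz hb (-1) (Or.inr rfl)
        (by rw [hLb, neg_one_smul])
      have hLL : ∀ x : E3, L₁ x = L₂ x := by
        intro x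
        obtain ⟨a', ha', b', hb', hab'⟩ := hdecomp x
        rw [hab', map_add, map_add, hL₁span a' ha', hL₂span a' ha', hL₂neg b' hb',
          hplane b' hb', neg_one_smul]
      exact (hR1R2 hLL).elim
  · -- c = -1 : L₁ u = -L₂ u
    rw [hc1] at hc
    have hL₁u' : L₁ u = -a + b := by
      have h12 : L₁ u = -(L₂ u) := by
        rw [hc, neg_one_smul, neg_neg]
      rw [h12, hL₂u]
      abel
    have heq : a + L₁ b = -a + b := by rw [← hL₁u, hL₁u']
    have h9 : a + a = b - L₁ b := by
      have h10 : (a + L₁ b) - (-a + b) = (a + a) - (b - L₁ b) := by abel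
      rw [heq, sub_self] at h10
      exact sub_eq_zero.mp h10.symm
    have ha0 : a = 0 := by
      have h13 : a + a = 0 := by
        apply huniq
        · exact Submodule.add_mem _ ha ha
        · rw [h9]; exact Submodule.sub_mem _ hb (hL₁P b hb)
      have h14 : (2:ℝ) • a = 0 := by rw [two_smul]; exact h13
      simpa using h14
    have hub : u = b := by rw [hab, ha0, zero_add]
    have hLu : L₁ u = u := by
      have := heq
      rw [ha0, neg_zero, zero_add, zero_add] at this
      rw [hub, this]
    have hplane := halfplane L₁ hdet₁ d hd0 hL₁d u hu0 (hub ▸ hb) 1 (Or.inl rfl)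
      (by rw [hLu, one_smul])
    have hLL : ∀ x : E3, L₁ x = x := by
      intro x
      obtain ⟨a', ha', b', hb', hab'⟩ := hdecomp x
      rw [hab', map_add, hL₁span a' ha', hplane b' hb', one_smul]
    exact (hR1id hLL).elim
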